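/- Suppose (φ, ζ) is a pair of smooth real functions on ℝ × [a, b] such that ∂_x φ − ∂_u ζ = 0 and ∂_x ζ + ∂_u φ − ζ = 0, with φ vanishing on the boundary components ℝ × {a} and ℝ × {b}, and with φ, ζ and their first derivatives square-integrable on ℝ × [a, b]. Then φ ≡ 0 and ζ ≡ 0. -/

import Mathlib

open MeasureTheory

/-- Partial derivative in the `x`-direction. -/
noncomputable def Dx (f : ℝ × ℝ → ℝ) (p : ℝ × ℝ) : ℝ := fderiv ℝ f p (1, 0)

/-- Partial derivative in the `u`-direction. -/
noncomputable def Du (f : ℝ × ℝ → ℝ) (p : ℝ × ℝ) : ℝ := fderiv ℝ f p (0, 1)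

section Aux
open Metric

lemma hasDerivAt_Dx (f : ℝ × ℝ → ℝ) (hf : ContDiff ℝ (⊤ : ℕ∞) f) (x u : ℝ) :
    HasDerivAt (fun t => f (t, u)) (Dx f (x, u)) x := by
  have h1 : HasFDerivAt f (fderiv ℝ f (x, u)) (x, u) :=
    (hf.differentiable (by simp) (x, u)).hasFDerivAt
  have h2 : HasDerivAt (fun t : ℝ => (t, u)) ((1 : ℝ), (0 : ℝ)) x :=
    (hasDerivAt_id x).prodMk (hasDerivAt_const x u)
  exact h1.comp_hasDerivAt x h2

lemma hasDerivAt_Du (f : ℝ × ℝ → ℝ) (hf : ContDiff ℝ (⊤ : ℕ∞) f) (x u : ℝ) :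
    HasDerivAt (fun t => f (x, t)) (Du f (x, u)) u := by
  have h1 : HasFDerivAt f (fderiv ℝ f (x, u)) (x, u) :=
    (hf.differentiable (by simp) (x, u)).hasFDerivAt
  have h2 : HasDerivAt (fun t : ℝ => (x, t)) ((0 : ℝ), (1 : ℝ)) u :=
    (hasDerivAt_const u x).prodMk (hasDerivAt_id u)
  exact h1.comp_hasDerivAt u h2

lemma continuous_Dx (f : ℝ × ℝ → ℝ) (hf : ContDiff ℝ (⊤ : ℕ∞) f) : Continuous (Dx f) :=
  (hf.continuous_fderiv (by simp)).clm_apply continuous_const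

lemma continuous_Du (f : ℝ × ℝ → ℝ) (hf : ContDiff ℝ (⊤ : ℕ∞) f) : Continuous (Du f) :=
  (hf.continuous_fderiv (by simp)).clm_apply continuous_const

lemma zero_of_integral_zero {f : ℝ → ℝ} {a b : ℝ} (hab : a < b) (hf : Continuous f)
    (hnn : ∀ u, 0 ≤ f u) (hz : (∫ u in a..b, f u) = 0) : ∀ u ∈ Set.Icc a b, f u = 0 := by
  intro u₀ hu₀
  by_contra h
  have hpos : 0 < f u₀ := lt_of_le_of_ne (hnn u₀) (Ne.symm h)
  obtain ⟨ε, hε, hball⟩ : ∃ ε > 0, ∀ v ∈ ball u₀ ε, 0 < f v := by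
    have hmem : f ⁻¹' (Set.Ioi 0) ∈ nhds u₀ :=
      hf.continuousAt.preimage_mem_nhds (Ioi_mem_nhds hpos)
    rcases Metric.mem_nhds_iff.1 hmem with ⟨ε, hε, hsub⟩
    exact ⟨ε, hε, fun v hv => hsub hv⟩
  set c := max a (u₀ - ε / 2) with hc
  set d := min b (u₀ + ε / 2) with hd
  have hac : a ≤ c := le_max_left _ _
  have hdb : d ≤ b := min_le_left _ _
  have hcd : c < d := by
    apply max_lt <;> apply lt_min
    · exact hab
    · linarith [hu₀.1]
    · linarith [hu₀.2]
    · linarith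
  have hint : ∀ p q : ℝ, IntervalIntegrable f volume p q := fun p q => hf.intervalIntegrable p q
  have h1 : 0 < ∫ u in c..d, f u := by
    apply intervalIntegral.intervalIntegral_pos_of_pos_on (hint c d) _ hcd
    intro v hv
    apply hball
    rw [Metric.mem_ball, Real.dist_eq, abs_lt]
    have h2 : v < u₀ + ε / 2 := lt_of_lt_of_le hv.2 (min_le_right _ _)
    have h3 : u₀ - ε / 2 < v := lt_of_le_of_lt (le_max_right a _) hv.1
    constructor <;> linarith
  have h2 : 0 ≤ ∫ u in a..c, f u := intervalIntegral.integral_nonneg hac (fun v _ => hnn v)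
  have h3 : 0 ≤ ∫ u in d..b, f u := intervalIntegral.integral_nonneg hdb (fun v _ => hnn v)
  have e1 : (∫ u in a..c, f u) + (∫ u in c..d, f u) = ∫ u in a..d, f u :=
    intervalIntegral.integral_add_adjacent_intervals (hint a c) (hint c d)
  have e2 : (∫ u in a..d, f u) + (∫ u in d..b, f u) = ∫ u in a..b, f u :=
    intervalIntegral.integral_add_adjacent_intervals (hint a d) (hint d b)
  linarith

lemma eq_zero_of_monotone_integrable {f : ℝ → ℝ} (hm : Monotone f)
    (hi : Integrable f) : ∀ x, f x = 0 := by
  intro x₀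
  by_contra h
  rcases lt_or_gt_of_ne h with hneg | hpos
  · have hconst : IntegrableOn (fun _ : ℝ => f x₀) (Set.Iic x₀) := by
      apply Integrable.mono' (hi.neg.integrableOn (s := Set.Iic x₀)) aestronglyMeasurable_const
      filter_upwards [ae_restrict_mem measurableSet_Iic] with y hy
      rw [Real.norm_eq_abs, abs_of_neg hneg]
      have := hm (hy : y ≤ x₀)
      simp only [Pi.neg_apply]
      linarith
    rw [integrableOn_const_iff] at hconst
    rcases hconst with h0 | hfin
    · exact h (by simpa using h0)
    · rw [Real.volume_Iic] at hfin; exact (lt_irrefl _ hfin).elim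
  · have hconst : IntegrableOn (fun _ : ℝ => f x₀) (Set.Ici x₀) := by
      apply Integrable.mono' (hi.integrableOn (s := Set.Ici x₀)) aestronglyMeasurable_const
      filter_upwards [ae_restrict_mem measurableSet_Ici] with y hy
      rw [Real.norm_eq_abs, abs_of_pos hpos]
      exact hm (hy : x₀ ≤ y)
    rw [integrableOn_const_iff] at hconst
    rcases hconst with h0 | hfin
    · exact h (by simpa using h0)
    · rw [Real.volume_Ici] at hfin; exact (lt_irrefl _ hfin).elim

lemma integrable_slice {a b : ℝ} (hab : a ≤ b) {g : ℝ × ℝ → ℝ}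
    (hg : IntegrableOn g (Set.univ ×ˢ Set.Icc a b)) :
    Integrable (fun x => ∫ u in a..b, g (x, u)) := by
  have h1 : Integrable g ((volume : Measure ℝ).prod (volume.restrict (Set.Icc a b))) := by
    have := (Measure.prod_restrict (μ := (volume : Measure ℝ)) (ν := (volume : Measure ℝ))
      Set.univ (Set.Icc a b))
    rw [IntegrableOn, Measure.volume_eq_prod, ← this, Measure.restrict_univ] at hg
    exact hg
  have h2 : Integrable (fun x => ∫ u in Set.Icc a b, g (x, u)) volume :=
    h1.integral_prod_left
  have h3 : (fun x => ∫ u in a..b, g (x, u)) = fun x => ∫ u in Set.Icc a b, g (x, u) := by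
    funext x
    rw [intervalIntegral.integral_of_le hab, ← MeasureTheory.integral_Icc_eq_integral_Ioc]
  rw [h3]
  exact h2

end Aux

/-- A smooth pair `(φ, ζ)` on the strip `ℝ × [a, b]` satisfying `∂ₓφ − ∂ᵤζ = 0` and
`∂ₓζ + ∂ᵤφ − ζ = 0`, with `φ` vanishing on both boundary lines and with `φ, ζ` and their
first derivatives square-integrable on the strip, must vanish identically. -/
theorem strip_system_rigidity (a b : ℝ) (hab : a < b)
    (φ ζ : ℝ × ℝ → ℝ)
    (hφ : ContDiff ℝ (⊤ : ℕ∞) φ) (hζ : ContDiff ℝ (⊤ : ℕ∞) ζ)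
    (heq1 : ∀ p : ℝ × ℝ, p.2 ∈ Set.Icc a b → Dx φ p - Du ζ p = 0)
    (heq2 : ∀ p : ℝ × ℝ, p.2 ∈ Set.Icc a b → Dx ζ p + Du φ p - ζ p = 0)
    (hbd : ∀ x : ℝ, φ (x, a) = 0 ∧ φ (x, b) = 0)
    (hL2φ : IntegrableOn (fun p => (φ p) ^ 2) (Set.univ ×ˢ Set.Icc a b))
    (hL2ζ : IntegrableOn (fun p => (ζ p) ^ 2) (Set.univ ×ˢ Set.Icc a b))
    (hL2dφ : IntegrableOn (fun p => ‖fderiv ℝ φ p‖ ^ 2) (Set.univ ×ˢ Set.Icc a b))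
    (hL2dζ : IntegrableOn (fun p => ‖fderiv ℝ ζ p‖ ^ 2) (Set.univ ×ˢ Set.Icc a b)) :
    ∀ p : ℝ × ℝ, p.2 ∈ Set.Icc a b → φ p = 0 ∧ ζ p = 0 := by
  have hφc : Continuous φ := hφ.continuous
  have hζc : Continuous ζ := hζ.continuous
  have hDxφ : Continuous (Dx φ) := continuous_Dx φ hφ
  have hDxζ : Continuous (Dx ζ) := continuous_Dx ζ hζ
  have hDuφ : Continuous (Du φ) := continuous_Du φ hφ
  have hDuζ : Continuous (Du ζ) := continuous_Du ζ hζ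
  have huIcc : Set.uIcc a b = Set.Icc a b := Set.uIcc_of_le hab.le
  -- the energy-type function and its derivative
  set I : ℝ → ℝ := fun x => ∫ u in a..b, (ζ (x, u) ^ 2 - φ (x, u) ^ 2) / 2 with hIdef
  set g : ℝ → ℝ := fun x => ∫ u in a..b, ζ (x, u) ^ 2 with hgdef
  -- Step A : I has derivative g everywhere
  have stepA : ∀ x₀ : ℝ, HasDerivAt I (g x₀) x₀ := by
    intro x₀
    have hcF : ∀ x : ℝ, Continuous fun u => (ζ (x, u) ^ 2 - φ (x, u) ^ 2) / 2 := fun x =>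
      (((hζc.comp (Continuous.prodMk_right x)).pow 2).sub
        ((hφc.comp (Continuous.prodMk_right x)).pow 2)).div_const 2
    have hcζ2 : Continuous fun u => ζ (x₀, u) ^ 2 :=
      (hζc.comp (Continuous.prodMk_right x₀)).pow 2
    have hcP : Continuous fun u => Du φ (x₀, u) * ζ (x₀, u) + φ (x₀, u) * Du ζ (x₀, u) :=
      ((hDuφ.comp (Continuous.prodMk_right x₀)).mul (hζc.comp (Continuous.prodMk_right x₀))).add
        ((hφc.comp (Continuous.prodMk_right x₀)).mul (hDuζ.comp (Continuous.prodMk_right x₀)))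
    set F' : ℝ → ℝ → ℝ :=
      fun x u => ζ (x, u) * Dx ζ (x, u) - φ (x, u) * Dx φ (x, u) with hF'def
    have hF'cont : Continuous fun p : ℝ × ℝ => F' p.1 p.2 := by
      apply Continuous.sub
      · exact (hζc.comp (continuous_fst.prodMk continuous_snd)).mul
          (hDxζ.comp (continuous_fst.prodMk continuous_snd))
      · exact (hφc.comp (continuous_fst.prodMk continuous_snd)).mul
          (hDxφ.comp (continuous_fst.prodMk continuous_snd))
    have hcF' : Continuous (F' x₀) := hF'cont.comp (Continuous.prodMk_right x₀)
    obtain ⟨C, hC⟩ : ∃ C : ℝ, ∀ p ∈ (Set.Icc (x₀ - 1) (x₀ + 1)) ×ˢ Set.uIcc a b,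
        ‖F' p.1 p.2‖ ≤ C := by
      have hcpt : IsCompact ((Set.Icc (x₀ - 1) (x₀ + 1)) ×ˢ Set.uIcc a b) :=
        isCompact_Icc.prod isCompact_uIcc
      exact hcpt.exists_bound_of_continuousOn hF'cont.continuousOn
    have key := intervalIntegral.hasDerivAt_integral_of_dominated_loc_of_deriv_le
      (F := fun x u => (ζ (x, u) ^ 2 - φ (x, u) ^ 2) / 2) (F' := F')
      (x₀ := x₀) (a := a) (b := b) (μ := volume) (bound := fun _ => C) (Metric.ball_mem_nhds x₀ one_pos)
      (Filter.Eventually.of_forall fun x => (hcF x).aestronglyMeasurable)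
      ((hcF x₀).intervalIntegrable a b)
      hcF'.aestronglyMeasurable
      (Filter.Eventually.of_forall fun t ht x hx => by
        apply hC (x, t)
        constructor
        · rw [Metric.mem_ball, Real.dist_eq, abs_lt] at hx
          exact ⟨by linarith [hx.1], by linarith [hx.2]⟩
        · exact Set.uIoc_subset_uIcc ht)
      (intervalIntegrable_const)
      (Filter.Eventually.of_forall fun t ht x hx => by
        have h1 := (hasDerivAt_Dx ζ hζ x t).fun_pow 2
        have h2 := (hasDerivAt_Dx φ hφ x t).fun_pow 2
        have h3 := (h1.sub h2).div_const 2
        refine h3.congr_deriv ?_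
        simp only [hF'def]
        ring)
    have hval : (∫ u in a..b, F' x₀ u) = g x₀ := by
      have hprod : ∀ u : ℝ, HasDerivAt (fun t => φ (x₀, t) * ζ (x₀, t))
          (Du φ (x₀, u) * ζ (x₀, u) + φ (x₀, u) * Du ζ (x₀, u)) u :=
        fun u => (hasDerivAt_Du φ hφ x₀ u).mul (hasDerivAt_Du ζ hζ x₀ u)
      have hftc : (∫ u in a..b, (Du φ (x₀, u) * ζ (x₀, u) + φ (x₀, u) * Du ζ (x₀, u))) = 0 := by
        rw [intervalIntegral.integral_eq_sub_of_hasDerivAt (fun u _ => hprod u)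
          (hcP.intervalIntegrable a b)]
        rw [(hbd x₀).1, (hbd x₀).2]
        ring
      have hcongr : (∫ u in a..b, F' x₀ u)
          = ∫ u in a..b, (ζ (x₀, u) ^ 2 - (Du φ (x₀, u) * ζ (x₀, u) + φ (x₀, u) * Du ζ (x₀, u))) := by
        apply intervalIntegral.integral_congr
        intro u hu
        rw [huIcc] at hu
        have e1 := heq1 (x₀, u) hu
        have e2 := heq2 (x₀, u) hu
        simp only [hF'def]
        have h1 : Dx ζ (x₀, u) = ζ (x₀, u) - Du φ (x₀, u) := by linarith
        have h2 : Dx φ (x₀, u) = Du ζ (x₀, u) := by linarith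
        rw [h1, h2]
        ring
      rw [hcongr, intervalIntegral.integral_sub (hcζ2.intervalIntegrable a b)
        (hcP.intervalIntegrable a b), hftc]
      simp [hgdef]
    rw [← hval]
    exact key.2
  -- g is nonnegative
  have hgnn : ∀ x, 0 ≤ g x := fun x =>
    intervalIntegral.integral_nonneg hab.le (fun u _ => sq_nonneg _)
  -- I is monotone
  have hIdiff : Differentiable ℝ I := fun x => (stepA x).differentiableAt
  have hImono : Monotone I := by
    apply monotone_of_deriv_nonneg hIdiff
    intro x
    rw [(stepA x).deriv]
    exact hgnn x
  -- I is integrable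
  have hIcont : Continuous I := hIdiff.continuous
  have hGζ : Integrable (fun x => ∫ u in a..b, ζ (x, u) ^ 2) :=
    integrable_slice hab.le (g := fun p => ζ p ^ 2) hL2ζ
  have hGφ : Integrable (fun x => ∫ u in a..b, φ (x, u) ^ 2) :=
    integrable_slice hab.le (g := fun p => φ p ^ 2) hL2φ
  have hIint : Integrable I := by
    apply Integrable.mono' (((hGζ.add hGφ).div_const 2)) hIcont.aestronglyMeasurable
    apply Filter.Eventually.of_forall
    intro x
    have habs : |∫ u in a..b, (ζ (x, u) ^ 2 - φ (x, u) ^ 2) / 2|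
        ≤ ∫ u in a..b, |(ζ (x, u) ^ 2 - φ (x, u) ^ 2) / 2| :=
      intervalIntegral.abs_integral_le_integral_abs hab.le
    have hmono : (∫ u in a..b, |(ζ (x, u) ^ 2 - φ (x, u) ^ 2) / 2|)
        ≤ ∫ u in a..b, (ζ (x, u) ^ 2 + φ (x, u) ^ 2) / 2 := by
      apply intervalIntegral.integral_mono_on hab.le
      · have hcc : Continuous fun u => |(ζ (x, u) ^ 2 - φ (x, u) ^ 2) / 2| :=
          ((((hζc.comp (Continuous.prodMk_right x)).pow 2).sub
            ((hφc.comp (Continuous.prodMk_right x)).pow 2)).div_const 2).abs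
        exact hcc.intervalIntegrable a b
      · have hcc : Continuous fun u => (ζ (x, u) ^ 2 + φ (x, u) ^ 2) / 2 :=
          ((((hζc.comp (Continuous.prodMk_right x)).pow 2).add
            ((hφc.comp (Continuous.prodMk_right x)).pow 2)).div_const 2)
        exact hcc.intervalIntegrable a b
      · intro u _
        rcases abs_cases ((ζ (x, u) ^ 2 - φ (x, u) ^ 2) / 2) with ⟨h, _⟩ | ⟨h, _⟩ <;>
          rw [h] <;> nlinarith [sq_nonneg (ζ (x, u)), sq_nonneg (φ (x, u))]
    have hcz2 : Continuous fun u => ζ (x, u) ^ 2 := (hζc.comp (Continuous.prodMk_right x)).pow 2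
    have hcp2 : Continuous fun u => φ (x, u) ^ 2 := (hφc.comp (Continuous.prodMk_right x)).pow 2
    have hsum : (∫ u in a..b, (ζ (x, u) ^ 2 + φ (x, u) ^ 2) / 2)
        = ((∫ u in a..b, ζ (x, u) ^ 2) + ∫ u in a..b, φ (x, u) ^ 2) / 2 := by
      rw [← intervalIntegral.integral_add (hcz2.intervalIntegrable a b)
        (hcp2.intervalIntegrable a b), ← intervalIntegral.integral_div]
    rw [Real.norm_eq_abs]
    simp only [hIdef, Pi.add_apply, Pi.div_apply]
    calc |∫ u in a..b, (ζ (x, u) ^ 2 - φ (x, u) ^ 2) / 2|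
        ≤ ∫ u in a..b, (ζ (x, u) ^ 2 + φ (x, u) ^ 2) / 2 := le_trans habs hmono
      _ = ((∫ u in a..b, ζ (x, u) ^ 2) + ∫ u in a..b, φ (x, u) ^ 2) / 2 := hsum
  -- I ≡ 0, hence g ≡ 0
  have hIzero : ∀ x, I x = 0 := eq_zero_of_monotone_integrable hImono hIint
  have hgzero : ∀ x, g x = 0 := by
    intro x
    have h0 : HasDerivAt I 0 x := by
      rw [show I = fun _ => (0 : ℝ) from funext hIzero]
      exact hasDerivAt_const x 0
    exact (stepA x).unique h0
  -- ζ ≡ 0 on the strip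
  have hζzero : ∀ x : ℝ, ∀ u ∈ Set.Icc a b, ζ (x, u) = 0 := by
    intro x u hu
    have hcc : Continuous fun u => ζ (x, u) ^ 2 := (hζc.comp (Continuous.prodMk_right x)).pow 2
    have h2 : ζ (x, u) ^ 2 = 0 :=
      zero_of_integral_zero hab hcc (fun u => sq_nonneg _) (hgzero x) u hu
    exact pow_eq_zero_iff (by norm_num) |>.mp h2
  -- Dx ζ = 0 on the strip
  have hDxζzero : ∀ x : ℝ, ∀ u ∈ Set.Icc a b, Dx ζ (x, u) = 0 := by
    intro x u hu
    have hd : HasDerivAt (fun t => ζ (t, u)) (Dx ζ (x, u)) x := hasDerivAt_Dx ζ hζ x u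
    rw [show (fun t => ζ (t, u)) = fun _ => (0 : ℝ) from funext fun t => hζzero t u hu] at hd
    exact hd.unique (hasDerivAt_const x 0)
  -- Du φ = 0 on the strip
  have hDuφzero : ∀ x : ℝ, ∀ u ∈ Set.Icc a b, Du φ (x, u) = 0 := by
    intro x u hu
    have e2 := heq2 (x, u) hu
    have h1 := hDxζzero x u hu
    have h2 := hζzero x u hu
    linarith
  -- φ ≡ 0 on the strip
  intro p hp
  obtain ⟨x, u⟩ := p
  simp only at hp ⊢
  refine ⟨?_, hζzero x u hp⟩
  have hftc : (∫ t in a..u, (0 : ℝ)) = φ (x, u) - φ (x, a) := by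
    apply intervalIntegral.integral_eq_sub_of_hasDerivAt (f := fun t => φ (x, t))
      (f' := fun _ => (0 : ℝ))
    · intro t ht
      rw [Set.uIcc_of_le hp.1] at ht
      have hd := hasDerivAt_Du φ hφ x t
      rw [hDuφzero x t ⟨ht.1, le_trans ht.2 hp.2⟩] at hd
      exact hd
    · exact intervalIntegrable_const
  simp only [intervalIntegral.integral_zero] at hftc
  have := (hbd x).1
  linarith
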